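/- Any bilinear contraction into ℝ (D = 1 case): if T : ℝ^M × ℝ^M → ℝ is a bilinear form with ‖T‖ ≤ 1 (i.e., |T(a,b)| ≤ ‖a‖‖b‖ for all a, b, Euclidean norms), then T can be dilated to a norm-preserving map; concretely, there exists a bilinear map T̃ : ℝ^M × ℝ^M → ℝ^{D'} for some D' whose first component is T and which satisfies ‖T̃(a,b)‖ = ‖a‖‖b‖ for all a, b. In particular one can take T̃(a,b) = (T(a,b)) ⊕ ((𝟙 − SᵀS)^{1/2}-corrected components) built from the singular value decomposition of the matrix S representing T. -/

import Mathlib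

set_option maxHeartbeats 1000000

open scoped MatrixOrder

open Finset in
private lemma dil_basis_expand {M : ℕ} (a : EuclideanSpace ℝ (Fin M)) :
    a = ∑ i, a i • EuclideanSpace.single i (1:ℝ) := by
  ext j
  have : (∑ i, a i • EuclideanSpace.single i (1:ℝ)) j
      = ∑ i, (a i • EuclideanSpace.single i (1:ℝ)) j :=
    by rw [WithLp.ofLp_sum, Finset.sum_apply]
  rw [this]
  simp [EuclideanSpace.single_apply]

private lemma dil_norm_sq {M : ℕ} (a : EuclideanSpace ℝ (Fin M)) :
    ‖a‖ ^ 2 = ∑ i, (a i) ^ 2 := by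
  rw [EuclideanSpace.norm_eq, Real.sq_sqrt (by positivity)]
  simp [sq_abs]

open Finset in
private lemma dil_lagrange {n : ℕ} (x y : Fin n → ℝ) :
    (∑ i, x i * y i) ^ 2 + (1/2) * (∑ i, ∑ j, (x i * y j - x j * y i) ^ 2)
      = (∑ i, x i ^ 2) * (∑ i, y i ^ 2) := by
  have h1 : (∑ i, x i ^ 2) * (∑ j, y j ^ 2) = ∑ i, ∑ j, x i ^ 2 * y j ^ 2 :=
    Finset.sum_mul_sum _ _ _ _
  have h2 : (∑ i, x i * y i) ^ 2 = ∑ i, ∑ j, (x i * y i) * (x j * y j) := by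
    rw [sq]; exact Finset.sum_mul_sum _ _ _ _
  have h4 : ∑ i, ∑ j, x j ^ 2 * y i ^ 2 = ∑ i, ∑ j, x i ^ 2 * y j ^ 2 :=
    Finset.sum_comm
  have h3 : ∑ i, ∑ j, (x i * y j - x j * y i) ^ 2
      = (∑ i, ∑ j, x i ^ 2 * y j ^ 2) + (∑ i, ∑ j, x j ^ 2 * y i ^ 2)
        - 2 * (∑ i, ∑ j, (x i * y i) * (x j * y j)) := by
    rw [Finset.mul_sum, ← Finset.sum_add_distrib, ← Finset.sum_sub_distrib]
    refine Finset.sum_congr rfl fun i _ => ?_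
    rw [Finset.mul_sum, ← Finset.sum_add_distrib, ← Finset.sum_sub_distrib]
    refine Finset.sum_congr rfl fun j _ => ?_
    ring
  rw [h3, h4]
  linarith [h1, h2]

/-- The component functions of the dilation. -/
private noncomputable def dilFun {M : ℕ}
    (T : EuclideanSpace ℝ (Fin M) →ₗ[ℝ] EuclideanSpace ℝ (Fin M) →ₗ[ℝ] ℝ)
    (S R : Matrix (Fin M) (Fin M) ℝ)
    (a b : EuclideanSpace ℝ (Fin M)) : (Fin 1 ⊕ ((Fin M × Fin M) ⊕ (Fin M × Fin M))) → ℝ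
  | Sum.inl _ => T a b
  | Sum.inr (Sum.inl (i, j)) =>
      (Real.sqrt 2)⁻¹ * (a i * (∑ l, S j l * b l) - a j * (∑ l, S i l * b l))
  | Sum.inr (Sum.inr (i, j)) => a i * (∑ l, R j l * b l)

private lemma dilFun_add_left {M : ℕ} (T) (S R : Matrix (Fin M) (Fin M) ℝ)
    (a a' b : EuclideanSpace ℝ (Fin M)) (k : (Fin 1 ⊕ ((Fin M × Fin M) ⊕ (Fin M × Fin M)))) :
    dilFun T S R (a + a') b k = dilFun T S R a b k + dilFun T S R a' b k := by
  rcases k with _ | (⟨i, j⟩ | ⟨i, j⟩) <;>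
    simp [dilFun, PiLp.add_apply, LinearMap.add_apply, map_add] <;> ring

private lemma dilFun_smul_left {M : ℕ} (T) (S R : Matrix (Fin M) (Fin M) ℝ)
    (r : ℝ) (a b : EuclideanSpace ℝ (Fin M)) (k : (Fin 1 ⊕ ((Fin M × Fin M) ⊕ (Fin M × Fin M)))) :
    dilFun T S R (r • a) b k = r * dilFun T S R a b k := by
  rcases k with _ | (⟨i, j⟩ | ⟨i, j⟩) <;>
    simp [dilFun, PiLp.smul_apply, LinearMap.smul_apply, map_smul, smul_eq_mul] <;> ring

private lemma dilFun_add_right {M : ℕ} (T) (S R : Matrix (Fin M) (Fin M) ℝ)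
    (a b b' : EuclideanSpace ℝ (Fin M)) (k : (Fin 1 ⊕ ((Fin M × Fin M) ⊕ (Fin M × Fin M)))) :
    dilFun T S R a (b + b') k = dilFun T S R a b k + dilFun T S R a b' k := by
  rcases k with _ | (⟨i, j⟩ | ⟨i, j⟩) <;>
    simp [dilFun, PiLp.add_apply, LinearMap.add_apply, map_add, mul_add,
      Finset.sum_add_distrib] <;> ring

private lemma dilFun_smul_right {M : ℕ} (T) (S R : Matrix (Fin M) (Fin M) ℝ)
    (r : ℝ) (a b : EuclideanSpace ℝ (Fin M)) (k : (Fin 1 ⊕ ((Fin M × Fin M) ⊕ (Fin M × Fin M)))) :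
    dilFun T S R a (r • b) k = r * dilFun T S R a b k := by
  have key : ∀ (Q : Matrix (Fin M) (Fin M) ℝ) (j : Fin M),
      (∑ l, Q j l * (r • b) l) = r * ∑ l, Q j l * b l := by
    intro Q j
    rw [Finset.mul_sum]
    refine Finset.sum_congr rfl fun l _ => ?_
    simp [PiLp.smul_apply]; ring
  rcases k with _ | (⟨i, j⟩ | ⟨i, j⟩)
  · simp [dilFun]
  · simp only [dilFun, key]; ring
  · simp only [dilFun, key]; ring

/-- Every bilinear contraction `T : ℝ^M × ℝ^M → ℝ` (i.e. `|T(a,b)| ≤ ‖a‖‖b‖`) can be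
dilated to a norm-preserving bilinear map: there is a bilinear map
`T̃ : ℝ^M × ℝ^M → ℝ^{D'}` whose first component is `T` and with `‖T̃(a,b)‖ = ‖a‖‖b‖`. -/
theorem bilinear_contraction_has_norm_preserving_dilation
    (M : ℕ)
    (T : EuclideanSpace ℝ (Fin M) →ₗ[ℝ] EuclideanSpace ℝ (Fin M) →ₗ[ℝ] ℝ)
    (hT : ∀ a b, |T a b| ≤ ‖a‖ * ‖b‖) :
    ∃ (D' : ℕ) (T' : EuclideanSpace ℝ (Fin M) →ₗ[ℝ] EuclideanSpace ℝ (Fin M) →ₗ[ℝ]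
        EuclideanSpace ℝ (Fin (D' + 1))),
      (∀ a b, T' a b 0 = T a b) ∧ (∀ a b, ‖T' a b‖ = ‖a‖ * ‖b‖) := by
  classical
  set S : Matrix (Fin M) (Fin M) ℝ :=
    fun i j => T (EuclideanSpace.single i 1) (EuclideanSpace.single j 1) with hSdef
  -- `T` is represented by the matrix `S`
  have hTS : ∀ a b : EuclideanSpace ℝ (Fin M),
      T a b = ∑ i, a i * ∑ l, S i l * b l := by
    intro a b
    conv_lhs => rw [dil_basis_expand a, dil_basis_expand b]
    simp only [map_sum, map_smul, LinearMap.sum_apply, LinearMap.smul_apply,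
      smul_eq_mul]
    simp only [Finset.mul_sum]
    rw [Finset.sum_comm]
    refine Finset.sum_congr rfl fun i _ => Finset.sum_congr rfl fun j _ => ?_
    simp only [hSdef]
    ring
  -- contraction property of `S`
  have hC : ∀ x : EuclideanSpace ℝ (Fin M),
      ∑ i, (∑ l, S i l * x l) ^ 2 ≤ ∑ i, x i ^ 2 := by
    intro x
    set c : EuclideanSpace ℝ (Fin M) :=
      (WithLp.equiv 2 (Fin M → ℝ)).symm (fun i => ∑ l, S i l * x l) with hc
    have hci : ∀ i, c i = ∑ l, S i l * x l := fun i => rfl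
    have h1 : T c x = ∑ i, c i ^ 2 := by
      rw [hTS c x]
      refine Finset.sum_congr rfl fun i _ => ?_
      rw [sq, hci]
    have h2 := hT c x
    have h3 : ‖c‖ ^ 2 = ∑ i, c i ^ 2 := dil_norm_sq c
    have h4 : ‖x‖ ^ 2 = ∑ i, x i ^ 2 := dil_norm_sq x
    have h5 : ‖c‖ ^ 2 ≤ ‖c‖ * ‖x‖ := by
      calc ‖c‖ ^ 2 = T c x := by rw [h1, ← h3]
      _ ≤ |T c x| := le_abs_self _
      _ ≤ ‖c‖ * ‖x‖ := h2
    have hgoal : ‖c‖ ^ 2 ≤ ‖x‖ ^ 2 := by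
      nlinarith [norm_nonneg c, norm_nonneg x]
    calc ∑ i, (∑ l, S i l * x l) ^ 2 = ∑ i, c i ^ 2 := by
          refine Finset.sum_congr rfl fun i _ => ?_; rw [hci]
      _ = ‖c‖ ^ 2 := h3.symm
      _ ≤ ‖x‖ ^ 2 := hgoal
      _ = ∑ i, x i ^ 2 := h4
  -- the defect matrix and its square root
  have hP : (1 - S.transpose * S).PosSemidef := by
    rw [Matrix.posSemidef_iff_dotProduct_mulVec]
    constructor
    · ext i j
      simp only [Matrix.conjTranspose_apply, Matrix.sub_apply, Matrix.one_apply,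
        Matrix.mul_apply, Matrix.transpose_apply, star_trivial]
      congr 1
      · simp [eq_comm]
      · exact Finset.sum_congr rfl fun k _ => mul_comm _ _
    · intro x
      have hx := hC ((WithLp.equiv 2 (Fin M → ℝ)).symm x)
      simp only [star_trivial]
      rw [Matrix.sub_mulVec, dotProduct_sub, Matrix.one_mulVec,
        ← Matrix.mulVec_mulVec, Matrix.dotProduct_mulVec, Matrix.vecMul_transpose]
      have e1 : dotProduct x x = ∑ i, x i ^ 2 := by
        simp [dotProduct, sq]
      have e2 : dotProduct (S.mulVec x) (S.mulVec x) = ∑ i, (∑ l, S i l * x l) ^ 2 := by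
        simp [dotProduct, Matrix.mulVec, sq]
      rw [e1, e2, sub_nonneg]
      simpa using hx
  set R : Matrix (Fin M) (Fin M) ℝ := CFC.sqrt (1 - S.transpose * S) with hRdef
  have hRsq : R * R = 1 - S.transpose * S := CFC.sqrt_mul_sqrt_self _ (Matrix.nonneg_iff_posSemidef.mpr hP)
  have hRT : R.transpose = R := by
    ext i j
    have := congrFun (congrFun (Matrix.nonneg_iff_posSemidef.mp (CFC.sqrt_nonneg (1 - S.transpose * S))).1 i) j
    simpa [Matrix.conjTranspose_apply] using this
  -- key identity for the defect components
  have hRsum : ∀ x : Fin M → ℝ,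
      ∑ j, (∑ l, R j l * x l) ^ 2 = (∑ j, x j ^ 2) - ∑ i, (∑ l, S i l * x l) ^ 2 := by
    intro x
    have e0 : ∀ (Q : Matrix (Fin M) (Fin M) ℝ),
        dotProduct (Q.mulVec x) (Q.mulVec x) = ∑ i, (∑ l, Q i l * x l) ^ 2 := by
      intro Q; simp [dotProduct, Matrix.mulVec, sq]
    have step : dotProduct (R.mulVec x) (R.mulVec x) = dotProduct ((1 - S.transpose * S).mulVec x) x := by
      rw [Matrix.dotProduct_mulVec, ← Matrix.mulVec_transpose, hRT,
        Matrix.mulVec_mulVec, hRsq]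
    have expand : dotProduct ((1 - S.transpose * S).mulVec x) x
        = (∑ j, x j ^ 2) - ∑ i, (∑ l, S i l * x l) ^ 2 := by
      rw [Matrix.sub_mulVec, sub_dotProduct, Matrix.one_mulVec,
        ← Matrix.mulVec_mulVec,
        dotProduct_comm (S.transpose.mulVec (S.mulVec x)) x,
        Matrix.dotProduct_mulVec, Matrix.vecMul_transpose, e0 S]
      congr 1
      simp [dotProduct, sq]
    rw [← e0 R, step, expand]
  -- the reindexing equivalence
  have hdim : 2 * M * M + 1 = 1 + (M * M + M * M) := by ring
  let e' : (Fin 1 ⊕ ((Fin M × Fin M) ⊕ (Fin M × Fin M))) ≃ Fin (1 + (M * M + M * M)) :=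
    (Equiv.sumCongr (Equiv.refl (Fin 1))
      ((Equiv.sumCongr finProdFinEquiv finProdFinEquiv).trans finSumFinEquiv)).trans
      finSumFinEquiv
  let E2 : Fin (2 * M * M + 1) ≃ (Fin 1 ⊕ ((Fin M × Fin M) ⊕ (Fin M × Fin M))) :=
    (finCongr hdim).trans e'.symm
  have hE2 : E2 0 = Sum.inl 0 := by
    have h0 : e' (Sum.inl 0) = finCongr hdim 0 := by
      apply Fin.ext
      simp [e', Equiv.sumCongr_apply, finSumFinEquiv]
    show e'.symm (finCongr hdim 0) = Sum.inl 0
    rw [← h0, Equiv.symm_apply_apply]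
  -- the dilated bilinear map
  set F : EuclideanSpace ℝ (Fin M) →ₗ[ℝ] EuclideanSpace ℝ (Fin M) →ₗ[ℝ]
      EuclideanSpace ℝ (Fin (2 * M * M + 1)) := LinearMap.mk₂ ℝ
    (fun a b => (WithLp.toLp 2 (fun k => dilFun T S R a b (E2 k)) :
      EuclideanSpace ℝ (Fin (2 * M * M + 1))))
    (fun a a' b => WithLp.ofLp_injective 2 <| funext fun k => dilFun_add_left T S R a a' b (E2 k))
    (fun r a b => WithLp.ofLp_injective 2 <| funext fun k => dilFun_smul_left T S R r a b (E2 k))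
    (fun a b b' => WithLp.ofLp_injective 2 <| funext fun k => dilFun_add_right T S R a b b' (E2 k))
    (fun r a b => WithLp.ofLp_injective 2 <| funext fun k => dilFun_smul_right T S R r a b (E2 k)) with hF
  have hFapp : ∀ a b k, F a b k = dilFun T S R a b (E2 k) := fun a b k => rfl
  refine ⟨2 * M * M, F, ?_, ?_⟩
  · intro a b
    rw [hFapp a b 0, hE2]
    rfl
  · intro a b
    have hsum : ∑ k : Fin (2 * M * M + 1), (dilFun T S R a b (E2 k)) ^ 2
        = ∑ i, (dilFun T S R a b i) ^ 2 :=
      Equiv.sum_comp E2 (fun i => (dilFun T S R a b i) ^ 2)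
    have key : ∑ i, (dilFun T S R a b i) ^ 2 = (∑ i, a i ^ 2) * (∑ i, b i ^ 2) := by
      rw [Fintype.sum_sum_type, Fintype.sum_sum_type, Fintype.sum_prod_type,
        Fintype.sum_prod_type]
      have c1 : ∀ _i : Fin 1, (dilFun T S R a b (Sum.inl _i)) ^ 2
          = (∑ i, a i * ∑ l, S i l * b l) ^ 2 := by
        intro _i; rw [show dilFun T S R a b (Sum.inl _i) = T a b from rfl, hTS]
      have c2 : ∀ i j : Fin M, (dilFun T S R a b (Sum.inr (Sum.inl (i, j)))) ^ 2
          = (1/2) * (a i * (∑ l, S j l * b l) - a j * (∑ l, S i l * b l)) ^ 2 := by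
        intro i j
        show ((Real.sqrt 2)⁻¹ * _) ^ 2 = _
        rw [mul_pow, inv_pow, Real.sq_sqrt (by norm_num : (2:ℝ) ≥ 0)]
        ring
      have c3 : ∀ i j : Fin M, (dilFun T S R a b (Sum.inr (Sum.inr (i, j)))) ^ 2
          = a i ^ 2 * (∑ l, R j l * b l) ^ 2 := by
        intro i j
        show (a i * (∑ l, R j l * b l)) ^ 2 = _
        ring
      simp only [c1, c2, c3]
      rw [Finset.sum_const, Finset.card_univ, Fintype.card_fin, one_smul]
      have lag := dil_lagrange (fun i => a i) (fun i => ∑ l, S i l * b l)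
      have prod : ∑ i : Fin M, ∑ j : Fin M, a i ^ 2 * (∑ l, R j l * b l) ^ 2
          = (∑ i, a i ^ 2) * (∑ j, (∑ l, R j l * b l) ^ 2) :=
        (Finset.sum_mul_sum _ _ _ _).symm
      have hd : ∑ j, (∑ l, R j l * b l) ^ 2
          = (∑ j, b j ^ 2) - ∑ i, (∑ l, S i l * b l) ^ 2 := hRsum b
      have c2' : ∑ i : Fin M, ∑ j : Fin M,
          (1/2) * (a i * (∑ l, S j l * b l) - a j * (∑ l, S i l * b l)) ^ 2
          = (1/2) * ∑ i : Fin M, ∑ j : Fin M,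
            (a i * (∑ l, S j l * b l) - a j * (∑ l, S i l * b l)) ^ 2 := by
        rw [Finset.mul_sum]
        exact Finset.sum_congr rfl fun i _ => (Finset.mul_sum _ _ _).symm
      rw [c2', prod, hd]
      nlinarith [lag]
    rw [EuclideanSpace.norm_eq]
    have habs : ∑ k, ‖F a b k‖ ^ 2
        = ∑ k : Fin (2 * M * M + 1), (dilFun T S R a b (E2 k)) ^ 2 := by
      refine Finset.sum_congr rfl fun k _ => ?_
      rw [hFapp, Real.norm_eq_abs, sq_abs]
    rw [habs, hsum, key]
    rw [show (∑ i, a i ^ 2) * (∑ i, b i ^ 2) = (‖a‖ * ‖b‖) ^ 2 by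
      rw [mul_pow, dil_norm_sq a, dil_norm_sq b]]
    exact Real.sqrt_sq (by positivity)
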